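/- Let f₀ be the sum f₀ = f^{(1)} + f^{(2)} where f^{(1)} is convex and M-Lipschitz and f^{(2)} is convex with L-Lipschitz gradient. Then for any points x, y and any subgradients g ∈ ∂f₀(x), g_y ∈ ∂f₀(y): ‖g‖² ≤ 6L(f₀(x) − f₀(y)) + 6L(f₀(y) − inf ĥ) + 6M², where ĥ(z) = f^{(2)}(z) + f^{(1)}(y) + ⟨g_y − ∇f^{(2)}(y), z − y⟩ satisfies ĥ ≤ f₀ and ĥ(y) = f₀(y). -/

import Mathlib

open RealInnerProductSpace

/-- Descent lemma: an everywhere-differentiable function with `L`-Lipschitz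
gradient satisfies the quadratic upper bound. -/
theorem descent_aux {E : Type*} [NormedAddCommGroup E] [InnerProductSpace ℝ E]
    [CompleteSpace E]
    (L : ℝ) (f : E → ℝ) (g : E → E) (hg : ∀ z, HasGradientAt f (g z) z)
    (hlip : ∀ z w, ‖g z - g w‖ ≤ L * ‖z - w‖) (a b : E) :
    f b ≤ f a + ⟪g a, b - a⟫ + L / 2 * ‖b - a‖ ^ 2 := by
  set d := b - a with hd
  have hline : ∀ t : ℝ, HasDerivAt (fun t : ℝ => a + t • d) d t := by
    intro t
    simpa using ((hasDerivAt_id t).smul_const d).const_add a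
  have hφ : ∀ t : ℝ, HasDerivAt (fun t : ℝ => f (a + t • d)) ⟪g (a + t • d), d⟫ t := by
    intro t
    have h1 : HasFDerivAt f (InnerProductSpace.toDual ℝ E (g (a + t • d))) (a + t • d) :=
      hg (a + t • d)
    have := h1.comp_hasDerivAt t (hline t)
    simpa [InnerProductSpace.toDual_apply_apply, Function.comp_def] using this
  have hgcont : Continuous g := by
    rcases le_or_gt L 0 with h | h
    · have heq : ∀ z w : E, g z = g w := by
        intro z w
        have h1 := hlip z w
        have h2 : ‖g z - g w‖ ≤ 0 := h1.trans (by nlinarith [norm_nonneg (z - w)])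
        have h3 := le_antisymm h2 (norm_nonneg _)
        rwa [norm_sub_eq_zero_iff] at h3
      have : g = fun _ => g 0 := funext fun z => heq z 0
      rw [this]; exact continuous_const
    · exact (LipschitzWith.of_dist_le_mul (K := ⟨L, h.le⟩) (by
        intro z w; rw [dist_eq_norm, dist_eq_norm]; exact hlip z w)).continuous
  have hcont : Continuous fun t : ℝ => ⟪g (a + t • d), d⟫ := by
    exact (Continuous.inner (hgcont.comp (by continuity)) continuous_const)
  have key : f b - f a = ∫ t in (0:ℝ)..1, ⟪g (a + t • d), d⟫ := by
    have := intervalIntegral.integral_eq_sub_of_hasDerivAt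
      (f := fun t : ℝ => f (a + t • d)) (a := 0) (b := 1)
      (fun t _ => hφ t) (hcont.intervalIntegrable 0 1)
    simp only [zero_smul, add_zero, one_smul] at this
    have hb : a + d = b := by rw [hd]; abel
    rw [hb] at this
    rw [this]
  have hbound : ∫ t in (0:ℝ)..1, ⟪g (a + t • d), d⟫
      ≤ ∫ t in (0:ℝ)..1, (⟪g a, d⟫ + t * (L * ‖d‖ ^ 2)) := by
    apply intervalIntegral.integral_mono_on (by norm_num)
      (hcont.intervalIntegrable 0 1)
      ((by continuity : Continuous fun t : ℝ => ⟪g a, d⟫ + t * (L * ‖d‖ ^ 2)).intervalIntegrable 0 1)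
    intro t ht
    have h1 : ⟪g (a + t • d) - g a, d⟫ ≤ ‖g (a + t • d) - g a‖ * ‖d‖ :=
      real_inner_le_norm _ _
    have h2 : ‖g (a + t • d) - g a‖ ≤ L * (t * ‖d‖) := by
      have := hlip (a + t • d) a
      simpa [norm_smul, abs_of_nonneg ht.1] using this
    have h3 : ⟪g (a + t • d), d⟫ = ⟪g a, d⟫ + ⟪g (a + t • d) - g a, d⟫ := by
      rw [inner_sub_left]; ring
    have hdn : (0:ℝ) ≤ ‖d‖ := norm_nonneg d
    nlinarith [norm_nonneg (g (a + t • d) - g a)]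
  have hint : ∫ t in (0:ℝ)..1, (⟪g a, d⟫ + t * (L * ‖d‖ ^ 2)) = ⟪g a, d⟫ + L / 2 * ‖d‖ ^ 2 := by
    rw [intervalIntegral.integral_add (intervalIntegrable_const)
      ((intervalIntegral.intervalIntegrable_id).mul_const _),
      intervalIntegral.integral_mul_const, integral_id, intervalIntegral.integral_const]
    norm_num
    ring
  nlinarith [key, hbound, hint]

/-- Subgradient norm bound for a sum `f₀ = f⁽¹⁾ + f⁽²⁾` of an `M`-Lipschitz
convex function and an `L`-smooth convex function. -/
theorem stmt_14 {E : Type*} [NormedAddCommGroup E] [InnerProductSpace ℝ E]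
    [FiniteDimensional ℝ E]
    (M L : ℝ) (hM : 0 ≤ M) (hL : 0 < L)
    (f₀ f₁ f₂ : E → ℝ) (hsum : ∀ z, f₀ z = f₁ z + f₂ z)
    (hf₁conv : ConvexOn ℝ Set.univ f₁)
    (hf₁lip : ∀ z w, |f₁ z - f₁ w| ≤ M * ‖z - w‖)
    (hf₂conv : ConvexOn ℝ Set.univ f₂)
    (g₂ : E → E) (hg₂ : ∀ z, HasGradientAt f₂ (g₂ z) z)
    (hg₂lip : ∀ z w, ‖g₂ z - g₂ w‖ ≤ L * ‖z - w‖)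
    (x y : E) (g gy : E)
    (hg : ∀ z, f₀ z ≥ f₀ x + ⟪g, z - x⟫)
    (hgy : ∀ z, f₀ z ≥ f₀ y + ⟪gy, z - y⟫)
    (hhat : E → ℝ)
    (hhatdef : ∀ z, hhat z = f₂ z + f₁ y + ⟪gy - g₂ y, z - y⟫)
    (hbdd : BddBelow (Set.range hhat)) :
    ‖g‖ ^ 2 ≤ 6 * L * (f₀ x - f₀ y) + 6 * L * (f₀ y - ⨅ z, hhat z) + 6 * M ^ 2 := by
  have hdesc := descent_aux L f₂ g₂ hg₂ hg₂lip
  -- the subgradient extraction step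
  have key : ∀ (p s : E), (∀ z, f₀ z ≥ f₀ p + ⟪s, z - p⟫) →
      ∀ d : E, f₁ (p + d) ≥ f₁ p + ⟪s - g₂ p, d⟫ := by
    intro p s hs d
    have step : ∀ t : ℝ, 0 < t → t ≤ 1 →
        f₁ (p + d) - f₁ p ≥ ⟪s - g₂ p, d⟫ - L / 2 * t * ‖d‖ ^ 2 := by
      intro t ht0 ht1
      have h0 := hs (p + t • d)
      have h0' : f₀ (p + t • d) ≥ f₀ p + t * ⟪s, d⟫ := by
        have : (p + t • d) - p = t • d := by abel
        rw [this, real_inner_smul_right] at h0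
        exact h0
      have hcvx : f₁ (p + t • d) ≤ (1 - t) * f₁ p + t * f₁ (p + d) := by
        have h := hf₁conv.2 (Set.mem_univ p) (Set.mem_univ (p + d))
          (by linarith : (0:ℝ) ≤ 1 - t) ht0.le (by ring)
        have heq : (1 - t) • p + t • (p + d) = p + t • d := by
          rw [smul_add, sub_smul, one_smul]; abel
        rw [heq] at h
        simpa [smul_eq_mul] using h
      have hd2 : f₂ (p + t • d) ≤ f₂ p + t * ⟪g₂ p, d⟫ + L / 2 * (t ^ 2 * ‖d‖ ^ 2) := by
        have h := hdesc p (p + t • d)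
        have h1 : (p + t • d) - p = t • d := by abel
        rw [h1, real_inner_smul_right, norm_smul] at h
        calc f₂ (p + t • d) ≤ f₂ p + t * ⟪g₂ p, d⟫ + L / 2 * (‖t‖ * ‖d‖) ^ 2 := h
          _ = f₂ p + t * ⟪g₂ p, d⟫ + L / 2 * (t ^ 2 * ‖d‖ ^ 2) := by
              rw [Real.norm_eq_abs, mul_pow, sq_abs]
      have e1 := hsum (p + t • d)
      have e2 := hsum p
      have hip : ⟪s - g₂ p, d⟫ = ⟪s, d⟫ - ⟪g₂ p, d⟫ := inner_sub_left _ _ _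
      nlinarith [sq_nonneg t]
    by_contra hcon
    push_neg at hcon
    set A := f₁ (p + d) - f₁ p with hA
    set B := ⟪s - g₂ p, d⟫ with hB
    have hAB : A < B := by linarith
    set c := L / 2 * ‖d‖ ^ 2 with hc
    have hc0 : 0 ≤ c := by positivity
    set t := min 1 ((B - A) / (c + 1)) with htdef
    have ht0 : 0 < t := lt_min one_pos (div_pos (by linarith) (by linarith))
    have ht1 : t ≤ 1 := min_le_left _ _
    have ht2 : t ≤ (B - A) / (c + 1) := min_le_right _ _
    have hstep := step t ht0 ht1
    have hct : c * t < B - A := by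
      have h1 : c * t ≤ c * ((B - A) / (c + 1)) := mul_le_mul_of_nonneg_left ht2 hc0
      have h2 : c * ((B - A) / (c + 1)) < (c + 1) * ((B - A) / (c + 1)) :=
        mul_lt_mul_of_pos_right (by linarith) (div_pos (by linarith) (by linarith))
      have h3 : (c + 1) * ((B - A) / (c + 1)) = B - A := by field_simp
      linarith
    have : A ≥ B - c * t := by
      have : L / 2 * t * ‖d‖ ^ 2 = c * t := by rw [hc]; ring
      linarith [hstep, this ▸ hstep]
    linarith
  -- subgradient vectors of f₁
  set u := g - g₂ x with hu_def
  set v := gy - g₂ y with hv_def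
  have sub1 : ∀ d : E, f₁ (x + d) ≥ f₁ x + ⟪u, d⟫ := key x g hg
  have sub2 : ∀ d : E, f₁ (y + d) ≥ f₁ y + ⟪v, d⟫ := key y gy hgy
  -- norm bounds on subgradients of the Lipschitz part
  have normbd : ∀ (p : E) (s : E), (∀ d : E, f₁ (p + d) ≥ f₁ p + ⟪s, d⟫) → ‖s‖ ≤ M := by
    intro p s hsub
    by_contra hcon
    push_neg at hcon
    have h1 := hsub s
    have h2 : |f₁ (p + s) - f₁ p| ≤ M * ‖s‖ := by
      have := hf₁lip (p + s) p
      simpa using this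
    have h3 : ⟪s, s⟫ = ‖s‖ ^ 2 := real_inner_self_eq_norm_sq s
    have h4 : f₁ (p + s) - f₁ p ≤ M * ‖s‖ := (abs_le.mp h2).2
    have h5 : 0 < ‖s‖ := lt_of_le_of_lt hM hcon
    nlinarith
  have hu : ‖u‖ ≤ M := normbd x u sub1
  have hv : ‖v‖ ≤ M := normbd y v sub2
  -- gradient of hhat at x and the 1/(2L) decrease
  set w := g₂ x + v with hw_def
  set b := x - (1 / L) • w with hb_def
  have hdec : hhat b ≤ hhat x - 1 / (2 * L) * ‖w‖ ^ 2 := by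
    have h1 := hdesc x b
    have hbx : b - x = -((1 / L) • w) := by rw [hb_def]; abel
    have hby : b - y = -((1 / L) • w) + (x - y) := by rw [hb_def]; abel
    have hn : ‖b - x‖ ^ 2 = (1 / L) ^ 2 * ‖w‖ ^ 2 := by
      rw [hbx, norm_neg, norm_smul, mul_pow, Real.norm_eq_abs, sq_abs]
    have hip1 : ⟪g₂ x, b - x⟫ = -(1 / L * ⟪g₂ x, w⟫) := by
      rw [hbx, inner_neg_right, real_inner_smul_right]
    have hip2 : ⟪v, b - y⟫ = -(1 / L * ⟪v, w⟫) + ⟪v, x - y⟫ := by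
      rw [hby, inner_add_right, inner_neg_right, real_inner_smul_right]
    have hsumw : ⟪g₂ x, w⟫ + ⟪v, w⟫ = ‖w‖ ^ 2 := by
      rw [← inner_add_left, ← hw_def, real_inner_self_eq_norm_sq]
    have hx' : hhat x = f₂ x + f₁ y + ⟪v, x - y⟫ := hhatdef x
    have hb' : hhat b = f₂ b + f₁ y + ⟪v, b - y⟫ := hhatdef b
    have hL' : L ≠ 0 := ne_of_gt hL
    rw [hx', hb']
    rw [hip2]
    have : f₂ b ≤ f₂ x + ⟪g₂ x, b - x⟫ + L / 2 * ‖b - x‖ ^ 2 := h1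
    rw [hip1, hn] at this
    have hfield : f₂ x + -(1 / L * ⟪g₂ x, w⟫) + L / 2 * ((1 / L) ^ 2 * ‖w‖ ^ 2)
        + f₁ y + (-(1 / L * ⟪v, w⟫) + ⟪v, x - y⟫)
        = f₂ x + f₁ y + ⟪v, x - y⟫ - 1 / (2 * L) * ‖w‖ ^ 2
          + (1 / L) * (‖w‖ ^ 2 - (⟪g₂ x, w⟫ + ⟪v, w⟫)) := by
      field_simp
      ring
    have hzero : (1 / L) * (‖w‖ ^ 2 - (⟪g₂ x, w⟫ + ⟪v, w⟫)) = 0 := by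
      rw [hsumw]; ring
    linarith [this, hfield, hzero]
  have hinf : (⨅ z, hhat z) ≤ hhat b := ciInf_le hbdd b
  have hw2 : ‖w‖ ^ 2 ≤ 2 * L * (hhat x - ⨅ z, hhat z) := by
    have h2L : 0 < 2 * L := by linarith
    have := hinf.trans hdec
    have h3 : 1 / (2 * L) * ‖w‖ ^ 2 ≤ hhat x - ⨅ z, hhat z := by linarith
    calc ‖w‖ ^ 2 = 2 * L * (1 / (2 * L) * ‖w‖ ^ 2) := by field_simp
      _ ≤ 2 * L * (hhat x - ⨅ z, hhat z) := by
          apply mul_le_mul_of_nonneg_left h3 h2L.le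
  -- hhat x ≤ f₀ x
  have hhx : hhat x ≤ f₀ x := by
    have h1 := sub2 (x - y)
    have h2 : y + (x - y) = x := by abel
    rw [h2] at h1
    rw [hhatdef x, hsum x]
    linarith
  -- put everything together
  have hgdecomp : g = u - v + w := by rw [hu_def, hw_def, hv_def]; abel
  have htriangle : ‖g‖ ≤ ‖u‖ + ‖v‖ + ‖w‖ := by
    rw [hgdecomp]
    calc ‖u - v + w‖ ≤ ‖u - v‖ + ‖w‖ := norm_add_le _ _
      _ ≤ ‖u‖ + ‖v‖ + ‖w‖ := by linarith [norm_sub_le u v]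
  have hun : 0 ≤ ‖u‖ := norm_nonneg u
  have hvn : 0 ≤ ‖v‖ := norm_nonneg v
  have hwn : 0 ≤ ‖w‖ := norm_nonneg w
  have hgn : 0 ≤ ‖g‖ := norm_nonneg g
  nlinarith [sq_nonneg (‖u‖ - ‖v‖), sq_nonneg (‖u‖ - ‖w‖), sq_nonneg (‖v‖ - ‖w‖),
    sq_nonneg (‖u‖ + ‖v‖ + ‖w‖), hw2, hhx, htriangle, hu, hv]
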